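/- Let h : ℝⁿ → ℝ be continuously differentiable and f : ℝⁿ → ℝⁿ locally Lipschitz, and let C = {x : h(x) ≤ 0}. Suppose x : [0,T) → ℝⁿ is a solution of ẋ = f(x) with x(0) ∈ C, and suppose there exists α > 0 such that ∇h(x)ᵀ f(x) ≤ -α·h(x) for all x in a neighborhood of C. Then h(x(t)) ≤ 0 for all t ∈ [0,T), i.e., C is forward invariant. -/

import Mathlib

/-- Forward invariance via the CBF condition with linear class-K function:
if ∇h(x)ᵀf(x) ≤ -α h(x) on a neighborhood of C = {h ≤ 0}, then any solution of
ẋ = f(x) starting in C satisfies h(x(t)) ≤ 0 for all t ∈ [0,T). -/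
theorem cbf_forward_invariance {n : ℕ}
    (h : (Fin n → ℝ) → ℝ) (f : (Fin n → ℝ) → (Fin n → ℝ))
    (hh : ContDiff ℝ 1 h) (hf : LocallyLipschitz f)
    (C : Set (Fin n → ℝ)) (hC : C = {x | h x ≤ 0})
    (T : ℝ) (x : ℝ → (Fin n → ℝ))
    (hsol : ∀ t ∈ Set.Ico (0 : ℝ) T, HasDerivAt x (f (x t)) t)
    (hx0 : x 0 ∈ C)
    (α : ℝ) (hα : 0 < α)
    (U : Set (Fin n → ℝ)) (hU : IsOpen U) (hCU : C ⊆ U)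
    (hcbf : ∀ y ∈ U, fderiv ℝ h y (f y) ≤ -α * h y) :
    ∀ t ∈ Set.Ico (0 : ℝ) T, h (x t) ≤ 0 := by
  rintro t₀ ⟨ht₀0, ht₀T⟩
  by_contra hpos
  push_neg at hpos
  -- g = h ∘ x and its derivative
  set g : ℝ → ℝ := fun t => h (x t) with hg_def
  have hhdiff : Differentiable ℝ h := hh.differentiable one_ne_zero
  have hgderiv : ∀ t ∈ Set.Ico (0 : ℝ) T,
      HasDerivAt g (fderiv ℝ h (x t) (f (x t))) t := fun t ht =>
    (hhdiff (x t)).hasFDerivAt.comp_hasDerivAt t (hsol t ht)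
  have hsub : Set.Icc (0 : ℝ) t₀ ⊆ Set.Ico 0 T := fun t ht =>
    ⟨ht.1, lt_of_le_of_lt ht.2 ht₀T⟩
  have hgcont : ContinuousOn g (Set.Icc 0 t₀) := fun t ht =>
    ((hgderiv t (hsub ht)).continuousAt).continuousWithinAt
  -- the set of times in [0,t₀] where g ≤ 0
  set S : Set ℝ := Set.Icc 0 t₀ ∩ g ⁻¹' Set.Iic 0 with hS_def
  have hSclosed : IsClosed S := hgcont.preimage_isClosed_of_isClosed isClosed_Icc isClosed_Iic
  have h0S : (0 : ℝ) ∈ S := by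
    refine ⟨⟨le_refl _, ht₀0⟩, ?_⟩
    simpa [hg_def, hC] using hx0
  have hSbdd : BddAbove S := ⟨t₀, fun t ht => ht.1.2⟩
  set s : ℝ := sSup S with hs_def
  have hsS : s ∈ S := hSclosed.csSup_mem ⟨0, h0S⟩ hSbdd
  have hs0 : 0 ≤ s := hsS.1.1
  have hst₀ : s ≤ t₀ := hsS.1.2
  have hgs : g s ≤ 0 := hsS.2
  have hsltt₀ : s < t₀ := by
    rcases lt_or_eq_of_le hst₀ with h' | h'
    · exact h'
    · exact absurd (h' ▸ hgs) (not_le.mpr hpos)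
  -- find b ∈ (s, t₀] with x '' [s,b] ⊆ U
  have hxsU : x s ∈ U := hCU (by simpa [hC] using hgs)
  have hxconts : ContinuousAt x s :=
    (hsol s ⟨hs0, hsltt₀.trans ht₀T⟩).continuousAt
  obtain ⟨ε, hε, hball⟩ := Metric.mem_nhds_iff.mp (hxconts.preimage_mem_nhds (hU.mem_nhds hxsU))
  set b : ℝ := min (s + ε / 2) t₀ with hb_def
  have hsb : s < b := lt_min (by linarith) hsltt₀
  have hbt₀ : b ≤ t₀ := min_le_right _ _
  have hmemU : ∀ t ∈ Set.Icc s b, x t ∈ U := by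
    intro t ht
    apply hball
    have h1 : t ≤ s + ε / 2 := le_trans ht.2 (min_le_left _ _)
    have : dist t s < ε := by
      rw [Real.dist_eq, abs_of_nonneg (by linarith [ht.1])]
      linarith
    exact this
  -- φ(t) = g(t) * exp(α t) is antitone on [s, b]
  set φ : ℝ → ℝ := fun t => g t * Real.exp (α * t) with hφ_def
  have hφderiv : ∀ t ∈ Set.Ico (0 : ℝ) T,
      HasDerivAt φ (fderiv ℝ h (x t) (f (x t)) * Real.exp (α * t)
        + g t * (Real.exp (α * t) * α)) t := by
    intro t ht
    have hexp : HasDerivAt (fun t => Real.exp (α * t)) (Real.exp (α * t) * α) t := by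
      have := (Real.hasDerivAt_exp (α * t)).comp t ((hasDerivAt_id t).const_mul α)
      simpa [Function.comp_def] using this
    exact (hgderiv t ht).mul hexp
  have hφcont : ContinuousOn φ (Set.Icc s b) := by
    intro t ht
    have htI : t ∈ Set.Ico (0 : ℝ) T :=
      ⟨le_trans hs0 ht.1, lt_of_le_of_lt (le_trans ht.2 hbt₀) ht₀T⟩
    exact (hφderiv t htI).continuousAt.continuousWithinAt
  have htImem : ∀ t ∈ Set.Ioo s b, t ∈ Set.Ico (0 : ℝ) T := fun t ht =>
    ⟨le_trans hs0 ht.1.le, ((lt_of_lt_of_le ht.2 hbt₀).trans ht₀T)⟩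
  have hanti : AntitoneOn φ (Set.Icc s b) := by
    apply antitoneOn_of_deriv_nonpos (convex_Icc s b) hφcont
    · intro t ht
      rw [interior_Icc] at ht
      exact (hφderiv t (htImem t ht)).differentiableAt.differentiableWithinAt
    intro t ht
    rw [interior_Icc] at ht
    have htI := htImem t ht
    rw [(hφderiv t htI).deriv]
    have hxU : x t ∈ U := hmemU t ⟨ht.1.le, ht.2.le⟩
    have hb := hcbf (x t) hxU
    have hexp_pos : 0 < Real.exp (α * t) := Real.exp_pos _
    nlinarith [hb, hexp_pos]
  have hφb : φ b ≤ φ s :=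
    hanti ⟨le_refl s, hsb.le⟩ ⟨hsb.le, le_refl b⟩ hsb.le
  have hφs : φ s ≤ 0 := mul_nonpos_of_nonpos_of_nonneg hgs (Real.exp_pos _).le
  have hgb : g b ≤ 0 := by
    have h2 : g b * Real.exp (α * b) ≤ 0 := le_trans hφb hφs
    have hexp_pos : 0 < Real.exp (α * b) := Real.exp_pos _
    nlinarith [h2, hexp_pos]
  have hbS : b ∈ S := ⟨⟨le_trans hs0 hsb.le, hbt₀⟩, hgb⟩
  have : b ≤ s := le_csSup hSbdd hbS
  linarith
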